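/- Coarea formula on graphs: for a finite weighted graph with nonnegative symmetric weights w and any function u : V -> [0,1], we have sum_{x,y in V} w(x,y) |u(y) - u(x)| = integral from 0 to 1 of sum_{x,y in V} w(x,y) |u^alpha(y) - u^alpha(x)| d alpha, where u^alpha(x) = 1 if u(x) >= alpha and 0 otherwise. -/

import Mathlib

open MeasureTheory

lemma coarea_ind_eq (a b α : ℝ) :
    |(if α ≤ b then (1 : ℝ) else 0) - (if α ≤ a then (1 : ℝ) else 0)|
      = (Set.Ioc (min a b) (max a b)).indicator (fun _ => (1 : ℝ)) α := by
  by_cases h1 : α ≤ a <;> by_cases h2 : α ≤ b <;>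
    simp only [h1, h2, if_true, if_false, Set.indicator_apply, Set.mem_Ioc]
  · rw [if_neg (fun h => absurd h.1 (not_lt.mpr (le_min h1 h2)))]; norm_num
  · rw [if_pos ⟨lt_of_le_of_lt (min_le_right a b) (not_le.mp h2),
      le_trans h1 (le_max_left a b)⟩]; norm_num
  · rw [if_pos ⟨lt_of_le_of_lt (min_le_left a b) (not_le.mp h1),
      le_trans h2 (le_max_right a b)⟩]; norm_num
  · rw [if_neg (fun h => absurd h.2
      (not_le.mpr (max_lt (not_le.mp h1) (not_le.mp h2))))]; norm_num

lemma coarea_integral (a b : ℝ) (ha : a ∈ Set.Icc (0 : ℝ) 1) (hb : b ∈ Set.Icc (0 : ℝ) 1) :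
    ∫ α in Set.Ioc (0 : ℝ) 1,
        |(if α ≤ b then (1 : ℝ) else 0) - (if α ≤ a then (1 : ℝ) else 0)| = |b - a| := by
  have hsub : Set.Ioc (min a b) (max a b) ⊆ Set.Ioc (0 : ℝ) 1 :=
    Set.Ioc_subset_Ioc (le_min ha.1 hb.1) (max_le ha.2 hb.2)
  calc ∫ α in Set.Ioc (0 : ℝ) 1,
        |(if α ≤ b then (1 : ℝ) else 0) - (if α ≤ a then (1 : ℝ) else 0)|
      = ∫ α in Set.Ioc (0 : ℝ) 1,
          (Set.Ioc (min a b) (max a b)).indicator (fun _ => (1 : ℝ)) α := by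
        refine integral_congr_ae (Filter.Eventually.of_forall fun α => coarea_ind_eq a b α)
    _ = ∫ α in Set.Ioc (min a b) (max a b), (1 : ℝ) := by
        rw [integral_indicator measurableSet_Ioc,
          Measure.restrict_restrict measurableSet_Ioc,
          Set.inter_eq_self_of_subset_left hsub]
    _ = |b - a| := by
        rw [setIntegral_const, Real.volume_real_Ioc_of_le min_le_max]
        rw [max_sub_min_eq_abs, smul_eq_mul, mul_one, abs_sub_comm]

theorem graph_coarea_formula {V : Type*} [Fintype V]
    (w : V → V → ℝ) (hsymm : ∀ x y, w x y = w y x) (hnonneg : ∀ x y, 0 ≤ w x y)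
    (u : V → ℝ) (hu : ∀ x, u x ∈ Set.Icc (0 : ℝ) 1) :
    ∑ x, ∑ y, w x y * |u y - u x|
      = ∫ α in Set.Ioc (0 : ℝ) 1,
          ∑ x, ∑ y, w x y * |(if α ≤ u y then (1 : ℝ) else 0)
            - (if α ≤ u x then (1 : ℝ) else 0)| := by
  have hint : ∀ x y : V, Integrable (fun α =>
      w x y * |(if α ≤ u y then (1 : ℝ) else 0) - (if α ≤ u x then (1 : ℝ) else 0)|)
      (volume.restrict (Set.Ioc (0 : ℝ) 1)) := by
    intro x y
    have : (fun α => w x y * |(if α ≤ u y then (1 : ℝ) else 0) - (if α ≤ u x then (1 : ℝ) else 0)|)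
        = fun α => w x y * (Set.Ioc (min (u x) (u y)) (max (u x) (u y))).indicator
            (fun _ => (1 : ℝ)) α := by
      funext α; rw [coarea_ind_eq]
    rw [this]
    exact (((integrable_indicator_iff measurableSet_Ioc).mpr
      (integrableOn_const measure_Ioc_lt_top.ne)).restrict).const_mul _
  rw [integral_finset_sum _ (fun x _ => integrable_finset_sum _ (fun y _ => hint x y))]
  refine Finset.sum_congr rfl fun x _ => ?_
  rw [integral_finset_sum _ (fun y _ => hint x y)]
  refine Finset.sum_congr rfl fun y _ => ?_
  rw [integral_const_mul, coarea_integral (u x) (u y) (hu x) (hu y)]
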